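/- Suppose x ∈ [0,1]^n and y ∈ [0,1]^m satisfy x_i ≤ Σ_{j : i∈S_j} y_j for all i, and Σ_j y_j = k. If each set S_j is included independently in a random collection with k independent draws from the distribution (y_1/k, …, y_m/k), then for each element i, the probability that i is covered by the union of the drawn sets is at least (1 − 1/e)·x_i. -/

import Mathlib

lemma exp_neg_le_chord {t : ℝ} (h0 : 0 ≤ t) (h1 : t ≤ 1) :
    Real.exp (-t) ≤ 1 - (1 - 1 / Real.exp 1) * t := by
  have hc := convexOn_exp.2 (Set.mem_univ (0 : ℝ)) (Set.mem_univ (-1 : ℝ))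
    (by linarith : (0:ℝ) ≤ 1 - t) h0 (by ring)
  simp only [smul_eq_mul] at hc
  have : (1 - t) * 0 + t * (-1) = -t := by ring
  rw [this] at hc
  rw [Real.exp_zero, Real.exp_neg, Real.exp_neg] at hc
  rw [Real.exp_neg, one_div]
  linarith

theorem stmt_19 (n m k : ℕ) (hk : 0 < k) (S : Fin m → Finset (Fin n))
    (y : Fin m → ℝ) (hy : ∀ j, y j ∈ Set.Icc (0 : ℝ) 1)
    (hsum : ∑ j, y j = (k : ℝ))
    (x : Fin n → ℝ) (hx : ∀ i, x i ∈ Set.Icc (0 : ℝ) 1)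
    (hcov : ∀ i, x i ≤ ∑ j ∈ Finset.univ.filter (fun j => i ∈ S j), y j)
    (i : Fin n) :
    (1 - 1 / Real.exp 1) * x i ≤
      1 - (1 - (∑ j ∈ Finset.univ.filter (fun j => i ∈ S j), y j) / (k : ℝ)) ^ k := by
  set s := ∑ j ∈ Finset.univ.filter (fun j => i ∈ S j), y j with hs
  have hkpos : (0:ℝ) < k := Nat.cast_pos.mpr hk
  have hs0 : 0 ≤ s := Finset.sum_nonneg fun j _ => (hy j).1
  have hsk : s ≤ (k:ℝ) := by
    rw [← hsum]
    exact Finset.sum_le_sum_of_subset_of_nonneg (Finset.filter_subset _ _)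
      (fun j _ _ => (hy j).1)
  have hxi : x i ≤ s := hcov i
  have hx0 := (hx i).1
  have hx1 := (hx i).2
  -- (1 - s/k)^k ≤ exp(-s)
  have h1 : (1 - s / k) ^ k ≤ Real.exp (-s) := by
    have hb0 : 0 ≤ 1 - s / k := by
      have : s / k ≤ 1 := (div_le_one hkpos).mpr hsk
      linarith
    have hb : 1 - s / k ≤ Real.exp (-(s / k)) := by
      have := Real.add_one_le_exp (-(s/k)); linarith
    calc (1 - s / k) ^ k ≤ Real.exp (-(s/k)) ^ k := pow_le_pow_left₀ hb0 hb k
      _ = Real.exp (-s) := by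
          rw [← Real.exp_nat_mul]
          congr 1
          field_simp
  have h2 : Real.exp (-s) ≤ Real.exp (-(x i)) := Real.exp_le_exp.mpr (by linarith)
  have h3 : Real.exp (-(x i)) ≤ 1 - (1 - 1 / Real.exp 1) * x i :=
    exp_neg_le_chord hx0 hx1
  linarith
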